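/- arXiv:1206.5332 — 4 statements merged into one kernel-verified Lean document; each statement's English description precedes it below -/
import Mathlib

section
/- For every real r ≥ 1/2, the function f_r(s) = (2/(r(r+1))) s^{-r} + s/(r+1) - 1/r on [1, ∞) attains its minimum at s₀ = 2^{1/(r+1)}, and its minimum value satisfies f_r(s₀) ≥ (1/r)(2^{1/(r+1)} - 1). -/
lemma stmt_9_key (r s : ℝ) (hr0 : 0 < r) (hs : 0 < s) :
    (2 : ℝ) ^ (1 / (r + 1)) / r ≤ (2 / (r * (r + 1))) * s ^ (-r) + s / (r + 1) := by
  have hr1 : 0 < r + 1 := by linarith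
  set w₁ : ℝ := 1 / (r + 1) with hw₁def
  set w₂ : ℝ := r / (r + 1) with hw₂def
  have hw : w₁ + w₂ = 1 := by rw [hw₁def, hw₂def]; field_simp; ring
  have hw₁ : 0 ≤ w₁ := by positivity
  have hw₂ : 0 ≤ w₂ := by positivity
  have hp₁ : (0:ℝ) ≤ (2 / r) * s ^ (-r) := by positivity
  have hp₂ : (0:ℝ) ≤ s / r := by positivity
  have hamgm := Real.geom_mean_le_arith_mean2_weighted hw₁ hw₂ hp₁ hp₂ hw
  have e1 : -r * w₁ = -w₂ := by rw [hw₁def, hw₂def]; field_simp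
  have e2 : s ^ (-w₂) * s ^ w₂ = 1 := by
    rw [← Real.rpow_add hs]; simp
  have e3 : r ^ w₁ * r ^ w₂ = r := by
    rw [← Real.rpow_add hr0, hw, Real.rpow_one]
  have hgeom : ((2 / r) * s ^ (-r)) ^ w₁ * (s / r) ^ w₂ = (2 : ℝ) ^ w₁ / r := by
    rw [Real.mul_rpow (by positivity) (by positivity),
        Real.div_rpow (by norm_num) hr0.le,
        Real.div_rpow hs.le hr0.le,
        ← Real.rpow_mul hs.le, e1]
    calc (2:ℝ) ^ w₁ / r ^ w₁ * s ^ (-w₂) * (s ^ w₂ / r ^ w₂)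
        = (2:ℝ) ^ w₁ * (s ^ (-w₂) * s ^ w₂) / (r ^ w₁ * r ^ w₂) := by ring
      _ = (2:ℝ) ^ w₁ / r := by rw [e2, e3, mul_one]
  have harith : w₁ * ((2 / r) * s ^ (-r)) + w₂ * (s / r)
      = (2 / (r * (r + 1))) * s ^ (-r) + s / (r + 1) := by
    rw [hw₁def, hw₂def]; field_simp
  rw [hgeom, harith] at hamgm
  exact hamgm

theorem stmt_9 (r : ℝ) (hr : 1 / 2 ≤ r) :
    (∀ s : ℝ, 1 ≤ s →
        (2 / (r * (r + 1))) * ((2 : ℝ) ^ (1 / (r + 1))) ^ (-r) +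
            (2 : ℝ) ^ (1 / (r + 1)) / (r + 1) - 1 / r ≤
          (2 / (r * (r + 1))) * s ^ (-r) + s / (r + 1) - 1 / r) ∧
    (1 / r) * ((2 : ℝ) ^ (1 / (r + 1)) - 1) ≤
      (2 / (r * (r + 1))) * ((2 : ℝ) ^ (1 / (r + 1))) ^ (-r) +
        (2 : ℝ) ^ (1 / (r + 1)) / (r + 1) - 1 / r := by
  have hr0 : 0 < r := by linarith
  have hr1 : 0 < r + 1 := by linarith
  set s₀ : ℝ := (2 : ℝ) ^ (1 / (r + 1)) with hs₀def
  have hs₀pos : 0 < s₀ := Real.rpow_pos_of_pos (by norm_num) _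
  have h2 : s₀ ^ (-r) = s₀ / 2 := by
    rw [hs₀def, ← Real.rpow_mul (by norm_num : (0:ℝ) ≤ 2)]
    have : 1 / (r + 1) * (-r) = 1 / (r + 1) - 1 := by field_simp; ring
    rw [this, Real.rpow_sub (by norm_num : (0:ℝ) < 2), Real.rpow_one]
  have heq : (2 / (r * (r + 1))) * (s₀ / 2) + s₀ / (r + 1) = s₀ / r := by
    field_simp; ring
  constructor
  · intro s hs
    have hkey : s₀ / r ≤ 2 / (r * (r + 1)) * s ^ (-r) + s / (r + 1) :=
      stmt_9_key r s hr0 (by linarith)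
    rw [h2]
    linarith
  · rw [h2]
    have : (1 / r) * (s₀ - 1) = (2 / (r * (r + 1))) * (s₀ / 2) + s₀ / (r + 1) - 1 / r := by
      field_simp; ring
    linarith [this.le]
end

section
/- Let r ≥ 1/2 and R > 1 be real and define Φ_{r,3}(x) = ∫₀^x |y|^{r-1} |y+1| dy for x ∈ [-R, R]. Then there exists a constant C₁ > 0 (which may be taken as min(1, log 2)) independent of r and R such that |Φ_{r,3}(x)| ≥ (C₁ / (r(r+1))) |x|^r for all x ∈ [-R, R]. -/
open intervalIntegral MeasureTheory

/-- integrability of `t^(r-1) * |1-t|` on any interval. -/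
lemma aux_int1 {r : ℝ} (hr : 1 / 2 ≤ r) (c d : ℝ) :
    IntervalIntegrable (fun t : ℝ => t ^ (r - 1) * |1 - t|) volume c d :=
  (intervalIntegral.intervalIntegrable_rpow' (by linarith)).mul_continuousOn
    ((continuous_const.sub continuous_id).abs.continuousOn)

lemma aux_calcB {r : ℝ} (hr : 1 / 2 ≤ r) {b : ℝ} (hb : 0 ≤ b) (hb1 : b ≤ 1) :
    ∫ t in (0:ℝ)..b, t ^ (r - 1) * |1 - t| = b ^ r / r - b ^ (r + 1) / (r + 1) := by
  have hr0 : (0:ℝ) < r := by linarith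
  have h1 : ∫ t in (0:ℝ)..b, t ^ (r - 1) * |1 - t|
      = ∫ t in (0:ℝ)..b, (t ^ (r - 1) - t ^ r) := by
    apply intervalIntegral.integral_congr
    intro t ht
    rw [Set.uIcc_of_le hb] at ht
    dsimp only
    rcases eq_or_lt_of_le ht.1 with h0 | h0
    · subst h0
      rw [Real.zero_rpow hr0.ne', abs_of_nonneg (by norm_num), sub_zero, mul_one, sub_zero]
    · rw [abs_of_nonneg (by linarith [ht.2] : (0:ℝ) ≤ 1 - t), mul_sub, mul_one,
        ← Real.rpow_add_one h0.ne', show r - 1 + 1 = r from by ring]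
  rw [h1, intervalIntegral.integral_sub (intervalIntegral.intervalIntegrable_rpow' (by linarith))
    (intervalIntegral.intervalIntegrable_rpow' (by linarith)),
    integral_rpow (Or.inl (by linarith)), integral_rpow (Or.inl (by linarith)),
    show r - 1 + 1 = r from by ring, Real.zero_rpow hr0.ne',
    Real.zero_rpow (by positivity : (r + 1) ≠ 0)]
  ring

lemma aux_calcC {r : ℝ} (hr : 1 / 2 ≤ r) {b : ℝ} (hb : 1 ≤ b) :
    ∫ t in (1:ℝ)..b, t ^ (r - 1) * |1 - t|
      = (b ^ (r + 1) - 1) / (r + 1) - (b ^ r - 1) / r := by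
  have hr0 : (0:ℝ) < r := by linarith
  have h1 : ∫ t in (1:ℝ)..b, t ^ (r - 1) * |1 - t|
      = ∫ t in (1:ℝ)..b, (t ^ r - t ^ (r - 1)) := by
    apply intervalIntegral.integral_congr
    intro t ht
    rw [Set.uIcc_of_le hb] at ht
    dsimp only
    have ht0 : (0:ℝ) < t := by linarith [ht.1]
    rw [abs_of_nonpos (by linarith [ht.1] : (1:ℝ) - t ≤ 0), neg_sub, mul_sub, mul_one,
      ← Real.rpow_add_one ht0.ne', show r - 1 + 1 = r from by ring]
  rw [h1, intervalIntegral.integral_sub (intervalIntegral.intervalIntegrable_rpow' (by linarith))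
    (intervalIntegral.intervalIntegrable_rpow' (by linarith)),
    integral_rpow (Or.inl (by linarith)), integral_rpow (Or.inl (by linarith)),
    show r - 1 + 1 = r from by ring, Real.one_rpow, Real.one_rpow]

/-- key algebraic inequality via weighted AM-GM. -/
lemma aux_key {r a : ℝ} (hr : 0 < r) (ha : 0 ≤ a) :
    (r + 1 + Real.log 2) * a ^ r ≤ r * a ^ (r + 1) + 2 := by
  have hr1 : (0:ℝ) < r + 1 := by linarith
  have hw : r / (r + 1) + 1 / (r + 1) = 1 := by field_simp
  have h := Real.geom_mean_le_arith_mean2_weighted (by positivity) (by positivity)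
    (Real.rpow_nonneg ha (r + 1)) (by norm_num : (0:ℝ) ≤ 2) hw
  have h1 : ((a ^ (r + 1) : ℝ)) ^ (r / (r + 1)) = a ^ r := by
    rw [← Real.rpow_mul ha]
    congr 1
    field_simp
  rw [h1] at h
  have h2 : (1 + Real.log 2 / (r + 1)) ≤ (2:ℝ) ^ (1 / (r + 1)) := by
    rw [Real.rpow_def_of_pos (by norm_num : (0:ℝ) < 2)]
    calc 1 + Real.log 2 / (r + 1) = Real.log 2 * (1 / (r + 1)) + 1 := by ring
      _ ≤ _ := Real.add_one_le_exp _
  have har : 0 ≤ a ^ r := Real.rpow_nonneg ha r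
  have h3 : (1 + Real.log 2 / (r + 1)) * a ^ r ≤ (2:ℝ) ^ (1 / (r + 1)) * a ^ r :=
    mul_le_mul_of_nonneg_right h2 har
  have e1 : (r + 1) * (r / (r + 1) * a ^ (r + 1) + 1 / (r + 1) * 2) = r * a ^ (r + 1) + 2 := by
    field_simp
  have e2 : (r + 1) * ((1 + Real.log 2 / (r + 1)) * a ^ r) = (r + 1 + Real.log 2) * a ^ r := by
    field_simp
  calc (r + 1 + Real.log 2) * a ^ r
      = (r + 1) * ((1 + Real.log 2 / (r + 1)) * a ^ r) := e2.symm
    _ ≤ (r + 1) * ((2:ℝ) ^ (1 / (r + 1)) * a ^ r) := mul_le_mul_of_nonneg_left h3 hr1.le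
    _ = (r + 1) * (a ^ r * (2:ℝ) ^ (1 / (r + 1))) := by ring
    _ ≤ (r + 1) * (r / (r + 1) * a ^ (r + 1) + 1 / (r + 1) * 2) :=
        mul_le_mul_of_nonneg_left h hr1.le
    _ = r * a ^ (r + 1) + 2 := e1

theorem stmt_11 :
    ∃ C₁ : ℝ, 0 < C₁ ∧ ∀ r R : ℝ, 1 / 2 ≤ r → 1 < R →
      ∀ x : ℝ, x ∈ Set.Icc (-R) R →
        (C₁ / (r * (r + 1))) * |x| ^ r ≤ |(∫ y in (0 : ℝ)..x, |y| ^ (r - 1) * |y + 1|)| := by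
  refine ⟨Real.log 2, Real.log_pos (by norm_num), fun r R hr hR x hx => ?_⟩
  have hr0 : (0:ℝ) < r := by linarith
  have hr1 : (0:ℝ) < r + 1 := by linarith
  have hrr : (0:ℝ) < r * (r + 1) := by positivity
  have hlog1 : Real.log 2 ≤ 1 := by
    have := Real.log_two_lt_d9
    linarith
  have hlog0 : 0 < Real.log 2 := Real.log_pos (by norm_num)
  rcases le_or_gt 0 x with hx0 | hx0
  · -- nonnegative case
    have hcongr : (∫ y in (0:ℝ)..x, |y| ^ (r - 1) * |y + 1|)
        = ∫ y in (0:ℝ)..x, (y ^ r + y ^ (r - 1)) := by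
      apply intervalIntegral.integral_congr
      intro t ht
      rw [Set.uIcc_of_le hx0] at ht
      dsimp only
      rcases eq_or_lt_of_le ht.1 with h0 | h0
      · subst h0
        rw [abs_zero, Real.zero_rpow hr0.ne', zero_add, abs_of_nonneg (by norm_num : (0:ℝ) ≤ 1),
          mul_one, zero_add]
      · rw [abs_of_pos h0, abs_of_pos (by linarith : (0:ℝ) < t + 1), mul_add, mul_one,
          ← Real.rpow_add_one h0.ne', show r - 1 + 1 = r from by ring]
    have hval : (∫ y in (0:ℝ)..x, (y ^ r + y ^ (r - 1)))
        = x ^ (r + 1) / (r + 1) + x ^ r / r := by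
      rw [intervalIntegral.integral_add (intervalIntegral.intervalIntegrable_rpow' (by linarith))
        (intervalIntegral.intervalIntegrable_rpow' (by linarith)),
        integral_rpow (Or.inl (by linarith)), integral_rpow (Or.inl (by linarith)),
        show r - 1 + 1 = r from by ring, Real.zero_rpow hr0.ne',
        Real.zero_rpow (by positivity : (r + 1) ≠ 0)]
      ring
    rw [hcongr, hval, abs_of_nonneg hx0]
    have h1 : 0 ≤ x ^ (r + 1) / (r + 1) := by positivity
    have h2 : Real.log 2 / (r * (r + 1)) * x ^ r ≤ x ^ r / r := by
      rw [div_mul_eq_mul_div, div_le_div_iff₀ hrr hr0]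
      have hxr : 0 ≤ x ^ r := Real.rpow_nonneg hx0 r
      have f1 : Real.log 2 * (x ^ r * r) ≤ 1 * (x ^ r * r) :=
        mul_le_mul_of_nonneg_right hlog1 (mul_nonneg hxr hr0.le)
      have f2 : x ^ r * r ≤ x ^ r * (r * (r + 1)) :=
        mul_le_mul_of_nonneg_left (by nlinarith) hxr
      nlinarith [f1, f2]
    calc Real.log 2 / (r * (r + 1)) * x ^ r ≤ x ^ r / r := h2
      _ ≤ x ^ (r + 1) / (r + 1) + x ^ r / r := by linarith
      _ ≤ |x ^ (r + 1) / (r + 1) + x ^ r / r| := le_abs_self _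
  · -- negative case
    set a : ℝ := -x with hadef
    have ha0 : 0 < a := by simp [hadef]; linarith
    have haR : a ≤ R := by simp [hadef]; linarith [hx.1]
    have habs : |x| = a := abs_of_neg hx0
    have hflip : (∫ y in (0:ℝ)..x, |y| ^ (r - 1) * |y + 1|)
        = -(∫ t in (0:ℝ)..a, t ^ (r - 1) * |1 - t|) := by
      have hc : (∫ t in (0:ℝ)..a, t ^ (r - 1) * |1 - t|)
          = ∫ t in (0:ℝ)..a, |(-t)| ^ (r - 1) * |(-t) + 1| := by
        apply intervalIntegral.integral_congr
        intro t ht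
        rw [Set.uIcc_of_le ha0.le] at ht
        dsimp only
        rcases eq_or_lt_of_le ht.1 with h0 | h0
        · subst h0
          norm_num
        · rw [abs_neg, abs_of_pos h0, show (-t) + 1 = 1 - t from by ring]
      rw [hc, intervalIntegral.integral_comp_neg (fun y => |y| ^ (r - 1) * |y + 1|)]
      rw [neg_zero, show -a = x from by simp [hadef], intervalIntegral.integral_symm]
    rw [hflip, abs_neg, habs]
    rcases le_or_gt a 1 with ha1 | ha1
    · -- small a
      rw [aux_calcB hr ha0.le ha1]
      have har : 0 ≤ a ^ r := Real.rpow_nonneg ha0.le r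
      have hstep : a ^ (r + 1) ≤ a ^ r := by
        rw [Real.rpow_add_one ha0.ne']
        nlinarith
      have hgoal : Real.log 2 / (r * (r + 1)) * a ^ r ≤ a ^ r / r - a ^ (r + 1) / (r + 1) := by
        rw [div_mul_eq_mul_div, div_le_iff₀ hrr,
          show (a ^ r / r - a ^ (r + 1) / (r + 1)) * (r * (r + 1))
            = (r + 1) * a ^ r - r * a ^ (r + 1) from by field_simp]
        nlinarith
      exact hgoal.trans (le_abs_self _)
    · -- large a
      have hsplit : (∫ t in (0:ℝ)..a, t ^ (r - 1) * |1 - t|)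
          = (∫ t in (0:ℝ)..1, t ^ (r - 1) * |1 - t|)
            + ∫ t in (1:ℝ)..a, t ^ (r - 1) * |1 - t| :=
        (intervalIntegral.integral_add_adjacent_intervals (aux_int1 hr 0 1)
          (aux_int1 hr 1 a)).symm
      rw [hsplit, aux_calcB hr (by norm_num) (le_refl 1), aux_calcC hr ha1.le,
        Real.one_rpow, Real.one_rpow]
      have har : 0 ≤ a ^ r := Real.rpow_nonneg ha0.le r
      have hkey := aux_key hr0 ha0.le
      have hgoal : Real.log 2 / (r * (r + 1)) * a ^ r
          ≤ 1 / r - 1 / (r + 1) + ((a ^ (r + 1) - 1) / (r + 1) - (a ^ r - 1) / r) := by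
        rw [div_mul_eq_mul_div, div_le_iff₀ hrr,
          show (1 / r - 1 / (r + 1) + ((a ^ (r + 1) - 1) / (r + 1) - (a ^ r - 1) / r))
              * (r * (r + 1))
            = r * a ^ (r + 1) + 2 - (r + 1) * a ^ r from by field_simp; ring]
        nlinarith
      exact hgoal.trans (le_abs_self _)
end

section
/- Let r ≥ 1/2, m ≥ 3, R > 1 be reals. With Φ_{r,m}(x) = ∫₀^x |y|^{r-1} |y+1|^{(m-1)/2} dy, for every x ∈ [-R, 0) one has |Φ_{r,m}(x)| / |x|^r ≥ r^{(m-3)/2} ( (∫₀^{|x|} y^{r-1} |y-1| dy) / |x|^r )^{(m-1)/2}. -/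
open MeasureTheory intervalIntegral Set

lemma key_holder (r p a : ℝ) (hr : 0 < r) (hp : 1 ≤ p) (ha : 0 < a) :
    r ^ (p - 1) * ((∫ y in (0:ℝ)..a, y ^ (r - 1) * |y - 1|) / a ^ r) ^ p ≤
      (∫ y in (0:ℝ)..a, y ^ (r - 1) * |y - 1| ^ p) / a ^ r := by
  have hp0 : 0 < p := lt_of_lt_of_le one_pos hp
  have h1p' : (0:ℝ) ≤ 1 - 1 / p := by
    rw [sub_nonneg, div_le_one hp0]; linarith
  set A := ∫ y in (0:ℝ)..a, y ^ (r - 1) * |y - 1| with hA_def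
  set B := ∫ y in (0:ℝ)..a, y ^ (r - 1) * |y - 1| ^ p with hB_def
  have hA0 : 0 ≤ A := intervalIntegral.integral_nonneg ha.le
    (fun y hy => mul_nonneg (Real.rpow_nonneg hy.1 _) (abs_nonneg _))
  have hB0 : 0 ≤ B := intervalIntegral.integral_nonneg ha.le
    (fun y hy => mul_nonneg (Real.rpow_nonneg hy.1 _) (Real.rpow_nonneg (abs_nonneg _) _))
  have har : 0 < a ^ r := Real.rpow_pos_of_pos ha r
  -- integrability
  have hint1 : IntervalIntegrable (fun y : ℝ => y ^ (r - 1)) volume 0 a :=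
    intervalIntegral.intervalIntegrable_rpow' (by linarith)
  have hcont1 : ContinuousOn (fun y : ℝ => |y - 1|) (Set.uIcc 0 a) :=
    ((continuous_abs.comp (continuous_sub_right 1))).continuousOn
  have hcont2 : ContinuousOn (fun y : ℝ => |y - 1| ^ p) (Set.uIcc 0 a) :=
    (((continuous_abs.comp (continuous_sub_right 1))).rpow_const
      (fun yy => Or.inr hp0.le)).continuousOn
  have hiA : IntervalIntegrable (fun y : ℝ => y ^ (r - 1) * |y - 1|) volume 0 a :=
    hint1.mul_continuousOn hcont1
  have hiB : IntervalIntegrable (fun y : ℝ => y ^ (r - 1) * |y - 1| ^ p) volume 0 a :=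
    hint1.mul_continuousOn hcont2
  -- value of ∫ y^(r-1)
  have hC : (∫ y in (0:ℝ)..a, y ^ (r - 1)) = a ^ r / r := by
    rw [integral_rpow (Or.inl (by linarith))]
    have h1 : r - 1 + 1 = r := by ring
    rw [h1, Real.zero_rpow hr.ne']
    ring
  -- lintegral versions
  set μ := volume.restrict (Set.Ioc (0:ℝ) a) with hμ
  set F := fun y : ℝ => ENNReal.ofReal (y ^ (r - 1) * |y - 1| ^ p) with hF
  set G := fun y : ℝ => ENNReal.ofReal (y ^ (r - 1)) with hG
  have mF : Measurable F := by fun_prop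
  have mG : Measurable G := by fun_prop
  have hold := ENNReal.lintegral_mul_norm_pow_le (μ := μ) mF.aemeasurable mG.aemeasurable
    (p := 1 / p) (q := 1 - 1 / p) (by positivity) h1p' (by ring)
  -- pointwise identity on Ioc 0 a
  have hpt : ∀ y ∈ Set.Ioc (0:ℝ) a,
      ENNReal.ofReal (y ^ (r - 1) * |y - 1|) = F y ^ (1 / p) * G y ^ (1 - 1 / p) := by
    intro y hy
    have hy0 : 0 < y := hy.1
    have hyr : (0:ℝ) ≤ y ^ (r - 1) := Real.rpow_nonneg hy0.le _
    rw [hF, hG, ENNReal.ofReal_rpow_of_nonneg (mul_nonneg hyr (Real.rpow_nonneg (abs_nonneg _) _))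
        (by positivity), ENNReal.ofReal_rpow_of_nonneg hyr h1p',
      ← ENNReal.ofReal_mul (by positivity)]
    congr 1
    rw [Real.mul_rpow hyr (Real.rpow_nonneg (abs_nonneg _) _),
      ← Real.rpow_mul (abs_nonneg _), mul_one_div_cancel hp0.ne', Real.rpow_one,
      ← Real.rpow_mul hy0.le, ← Real.rpow_mul hy0.le, mul_right_comm,
      ← Real.rpow_add hy0,
      show (r - 1) * (1 / p) + (r - 1) * (1 - 1 / p) = r - 1 by field_simp; ring]
  -- lintegral conversions
  have h1 : ∫⁻ y, ENNReal.ofReal (y ^ (r - 1) * |y - 1|) ∂μ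
      = ∫⁻ y, F y ^ (1 / p) * G y ^ (1 - 1 / p) ∂μ := by
    rw [hμ]
    exact setLIntegral_congr_fun measurableSet_Ioc hpt
  have hAl : ∫⁻ y, ENNReal.ofReal (y ^ (r - 1) * |y - 1|) ∂μ = ENNReal.ofReal A := by
    rw [hμ, ← ofReal_integral_eq_lintegral_ofReal
      ((intervalIntegrable_iff_integrableOn_Ioc_of_le ha.le).mp hiA)
      ((ae_restrict_iff' measurableSet_Ioc).mpr (ae_of_all _ fun y hy =>
        mul_nonneg (Real.rpow_nonneg hy.1.le _) (abs_nonneg _)))]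
    rw [hA_def, intervalIntegral.integral_of_le ha.le]
  have hBl : ∫⁻ y, F y ∂μ = ENNReal.ofReal B := by
    rw [hF, hμ, ← ofReal_integral_eq_lintegral_ofReal
      ((intervalIntegrable_iff_integrableOn_Ioc_of_le ha.le).mp hiB)
      ((ae_restrict_iff' measurableSet_Ioc).mpr (ae_of_all _ fun y hy =>
        mul_nonneg (Real.rpow_nonneg hy.1.le _) (Real.rpow_nonneg (abs_nonneg _) _)))]
    rw [hB_def, intervalIntegral.integral_of_le ha.le]
  have hGl : ∫⁻ y, G y ∂μ = ENNReal.ofReal (a ^ r / r) := by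
    rw [hG, hμ, ← ofReal_integral_eq_lintegral_ofReal
      ((intervalIntegrable_iff_integrableOn_Ioc_of_le ha.le).mp hint1)
      ((ae_restrict_iff' measurableSet_Ioc).mpr (ae_of_all _ fun y hy =>
        Real.rpow_nonneg hy.1.le _))]
    rw [← hC, intervalIntegral.integral_of_le ha.le]
  -- Hölder in real form
  have key : ENNReal.ofReal A ≤ ENNReal.ofReal (B ^ (1 / p) * (a ^ r / r) ^ (1 - 1 / p)) := by
    rw [← hAl, h1]
    refine le_trans hold (le_of_eq ?_)
    rw [hBl, hGl, ENNReal.ofReal_rpow_of_nonneg hB0 (by positivity),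
      ENNReal.ofReal_rpow_of_nonneg (by positivity) h1p',
      ← ENNReal.ofReal_mul (Real.rpow_nonneg hB0 _)]
  have hA_le : A ≤ B ^ (1 / p) * (a ^ r / r) ^ (1 - 1 / p) :=
    (ENNReal.ofReal_le_ofReal_iff (mul_nonneg (Real.rpow_nonneg hB0 _)
      (Real.rpow_nonneg (by positivity) _))).mp key
  -- raise to the power p
  have hAp : A ^ p ≤ B * (a ^ r / r) ^ (p - 1) := by
    have h2 := Real.rpow_le_rpow hA0 hA_le hp0.le
    calc A ^ p ≤ (B ^ (1 / p) * (a ^ r / r) ^ (1 - 1 / p)) ^ p := h2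
      _ = B * (a ^ r / r) ^ (p - 1) := by
        rw [Real.mul_rpow (Real.rpow_nonneg hB0 _) (Real.rpow_nonneg (by positivity) _),
          ← Real.rpow_mul hB0, ← Real.rpow_mul (by positivity : (0:ℝ) ≤ a ^ r / r),
          one_div_mul_cancel hp0.ne', Real.rpow_one,
          show (1 - 1 / p) * p = p - 1 by field_simp]
  -- final algebra
  have h3 : (a ^ r / r) ^ (p - 1) = (a ^ r) ^ (p - 1) / r ^ (p - 1) :=
    Real.div_rpow har.le hr.le _
  have h4 : (a ^ r) ^ p = (a ^ r) ^ (p - 1) * a ^ r := by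
    rw [show p = p - 1 + 1 by ring, Real.rpow_add_one har.ne' (p - 1)]
    ring_nf
  have hu : (0:ℝ) < r ^ (p - 1) := Real.rpow_pos_of_pos hr _
  have hw : (0:ℝ) < (a ^ r) ^ (p - 1) := Real.rpow_pos_of_pos har _
  have hfin : r ^ (p - 1) * A ^ p * a ^ r ≤ B * (a ^ r) ^ p := by
    rw [h4]
    have h5 := mul_le_mul_of_nonneg_left hAp (mul_pos hu har).le
    calc r ^ (p - 1) * A ^ p * a ^ r = r ^ (p - 1) * a ^ r * A ^ p := by ring
      _ ≤ r ^ (p - 1) * a ^ r * (B * (a ^ r / r) ^ (p - 1)) := h5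
      _ = B * ((a ^ r) ^ (p - 1) * a ^ r) := by rw [h3]; field_simp
  rw [Real.div_rpow hA0 har.le, mul_div_assoc',
    div_le_div_iff₀ (Real.rpow_pos_of_pos har _) har]
  exact hfin

theorem stmt_13 (r m R : ℝ) (hr : 1 / 2 ≤ r) (hm : 3 ≤ m) (hR : 1 < R)
    (x : ℝ) (hx1 : -R ≤ x) (hx0 : x < 0) :
    r ^ ((m - 3) / 2) *
        ((∫ y in (0 : ℝ)..|x|, y ^ (r - 1) * |y - 1|) / |x| ^ r) ^ ((m - 1) / 2) ≤
      |∫ y in (0 : ℝ)..x, |y| ^ (r - 1) * |y + 1| ^ ((m - 1) / 2)| / |x| ^ r := by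
  have hr0 : (0:ℝ) < r := by linarith
  have hp1 : (1:ℝ) ≤ (m - 1) / 2 := by linarith
  have ha : (0:ℝ) < -x := by linarith
  have habs : |x| = -x := abs_of_neg hx0
  -- flip the integral
  have hcomp := intervalIntegral.integral_comp_neg (a := 0) (b := -x)
    (fun y : ℝ => |y| ^ (r - 1) * |y + 1| ^ ((m - 1) / 2))
  have hfunext : (fun y : ℝ => |(-y)| ^ (r - 1) * |(-y) + 1| ^ ((m - 1) / 2))
      = fun y : ℝ => |y| ^ (r - 1) * |y - 1| ^ ((m - 1) / 2) := by
    funext y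
    rw [abs_neg, show -y + 1 = -(y - 1) by ring, abs_neg]
  rw [hfunext] at hcomp
  simp only [neg_neg, neg_zero] at hcomp
  -- hcomp : ∫ y in 0..(-x), |y|^(r-1)*|y-1|^((m-1)/2) = ∫ y in x..0, |y|^(r-1)*|y+1|^((m-1)/2)
  have hflip : (∫ y in (0:ℝ)..x, |y| ^ (r - 1) * |y + 1| ^ ((m - 1) / 2))
      = -∫ y in (0:ℝ)..(-x), |y| ^ (r - 1) * |y - 1| ^ ((m - 1) / 2) := by
    rw [hcomp, intervalIntegral.integral_symm]
  -- remove |·| from the base on [0, -x]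
  have hBB : (∫ y in (0:ℝ)..(-x), |y| ^ (r - 1) * |y - 1| ^ ((m - 1) / 2))
      = ∫ y in (0:ℝ)..(-x), y ^ (r - 1) * |y - 1| ^ ((m - 1) / 2) := by
    apply intervalIntegral.integral_congr
    intro y hy
    rw [Set.uIcc_of_le ha.le] at hy
    simp only [abs_of_nonneg hy.1]
  have hBnn : 0 ≤ ∫ y in (0:ℝ)..(-x), y ^ (r - 1) * |y - 1| ^ ((m - 1) / 2) :=
    intervalIntegral.integral_nonneg ha.le
      (fun y hy => mul_nonneg (Real.rpow_nonneg hy.1 _) (Real.rpow_nonneg (abs_nonneg _) _))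
  rw [habs, hflip, hBB, abs_neg, abs_of_nonneg hBnn,
    show (m - 3) / 2 = (m - 1) / 2 - 1 by ring]
  exact key_holder r ((m - 1) / 2) (-x) hr0 hp1 ha
end

section
/- Let r ≥ 1/2, m > 1, and R > 1 be real numbers, and define Φ_{r,m}(x) = ∫₀^x |y|^{r-1} |y+1|^{(m-1)/2} dy for x ∈ [-R, R]. Then there exist constants C₁ = C₁(m) > 0 and C₂ = C₂(m,R) > 0 such that for all x ∈ [-R, R]: (C₁ / r^{1 + max(1, (m-1)/2)}) |x|^r ≤ |Φ_{r,m}(x)| ≤ (C₂ / r) |x|^r. -/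
open Real MeasureTheory Set intervalIntegral

private lemma pf_cont {α : ℝ} (hα : 0 ≤ α) (c : ℝ) :
    Continuous (fun t : ℝ => |t + c| ^ α) :=
  (continuous_abs.comp (continuous_id.add continuous_const)).rpow_const fun _ => Or.inr hα

private lemma pf_abs_int {p : ℝ} (hp : -1 < p) (a b : ℝ) :
    IntervalIntegrable (fun t : ℝ => |t| ^ p) volume a b := by
  have key0 : ∀ c : ℝ, 0 ≤ c → IntervalIntegrable (fun t : ℝ => |t| ^ p) volume 0 c := by
    intro c hc
    have h1 : IntervalIntegrable (fun t : ℝ => t ^ p) volume 0 c :=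
      intervalIntegrable_rpow' hp
    rw [intervalIntegrable_iff, uIoc_of_le hc] at h1 ⊢
    exact h1.congr_fun (fun t ht => by rw [abs_of_pos ht.1]) measurableSet_Ioc
  have key : ∀ c : ℝ, IntervalIntegrable (fun t : ℝ => |t| ^ p) volume 0 c := by
    intro c
    rcases le_total 0 c with hc | hc
    · exact key0 c hc
    · have h2 := key0 (-c) (by linarith)
      have h3 := (IntervalIntegrable.iff_comp_neg (f := fun t : ℝ => |t| ^ p) (by simp)).mp h2
      simp only [abs_neg, neg_neg, neg_zero] at h3
      exact h3
  exact (key a).symm.trans (key b)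

private lemma pf_int {p α : ℝ} (hp : -1 < p) (hα : 0 ≤ α) (c a b : ℝ) :
    IntervalIntegrable (fun t : ℝ => |t| ^ p * |t + c| ^ α) volume a b :=
  (pf_abs_int hp a b).mul_continuousOn (pf_cont hα c).continuousOn

private lemma pf_eval {r : ℝ} (hr : 0 < r) {s : ℝ} (hs : 0 ≤ s) :
    ∫ t in (0:ℝ)..s, |t| ^ (r - 1) = s ^ r / r := by
  have h1 : ∫ t in (0:ℝ)..s, |t| ^ (r - 1) = ∫ t in (0:ℝ)..s, t ^ (r - 1) := by
    apply integral_congr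
    intro t ht
    rw [uIcc_of_le hs] at ht
    simp only []
    rw [abs_of_nonneg ht.1]
  have h2 : r - 1 + 1 = r := by ring
  rw [h1, integral_rpow (Or.inl (by linarith)), h2, Real.zero_rpow hr.ne', sub_zero]

private lemma pf_lower {r α c K s : ℝ} (hr : 1/2 ≤ r) (hα : 0 ≤ α) (hs : 0 ≤ s)
    (h : ∀ t ∈ Icc (0:ℝ) s, K ≤ |t + c| ^ α) :
    K * (s ^ r / r) ≤ ∫ t in (0:ℝ)..s, |t| ^ (r - 1) * |t + c| ^ α := by
  have hr0 : (0:ℝ) < r := by linarith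
  have hp : (-1:ℝ) < r - 1 := by linarith
  have h1 : IntervalIntegrable (fun t : ℝ => K * |t| ^ (r-1)) volume 0 s :=
    (pf_abs_int hp 0 s).const_mul K
  have h2 := pf_int hp hα c 0 s
  have h3 : (∫ t in (0:ℝ)..s, K * |t| ^ (r-1)) ≤
      ∫ t in (0:ℝ)..s, |t| ^ (r-1) * |t + c| ^ α := by
    apply integral_mono_on hs h1 h2
    intro t ht
    rw [mul_comm K]
    exact mul_le_mul_of_nonneg_left (h t ht) (Real.rpow_nonneg (abs_nonneg t) _)
  calc K * (s ^ r / r) = ∫ t in (0:ℝ)..s, K * |t| ^ (r-1) := by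
        rw [intervalIntegral.integral_const_mul, pf_eval hr0 hs]
    _ ≤ _ := h3

private lemma pf_upper {r α c K s : ℝ} (hr : 1/2 ≤ r) (hα : 0 ≤ α) (hs : 0 ≤ s)
    (h : ∀ t ∈ Icc (0:ℝ) s, |t + c| ^ α ≤ K) :
    (∫ t in (0:ℝ)..s, |t| ^ (r - 1) * |t + c| ^ α) ≤ K * (s ^ r / r) := by
  have hr0 : (0:ℝ) < r := by linarith
  have hp : (-1:ℝ) < r - 1 := by linarith
  have h1 : IntervalIntegrable (fun t : ℝ => K * |t| ^ (r-1)) volume 0 s :=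
    (pf_abs_int hp 0 s).const_mul K
  have h2 := pf_int hp hα c 0 s
  have h3 : (∫ t in (0:ℝ)..s, |t| ^ (r-1) * |t + c| ^ α) ≤
      ∫ t in (0:ℝ)..s, K * |t| ^ (r-1) := by
    apply integral_mono_on hs h2 h1
    intro t ht
    rw [mul_comm K]
    exact mul_le_mul_of_nonneg_left (h t ht) (Real.rpow_nonneg (abs_nonneg t) _)
  calc (∫ t in (0:ℝ)..s, |t| ^ (r-1) * |t + c| ^ α) ≤ ∫ t in (0:ℝ)..s, K * |t| ^ (r-1) := h3
    _ = K * (s ^ r / r) := by rw [intervalIntegral.integral_const_mul, pf_eval hr0 hs]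

private lemma pf_mono {r α c : ℝ} (hr : 1/2 ≤ r) (hα : 0 ≤ α) {s' s : ℝ}
    (h0 : 0 ≤ s') (hss : s' ≤ s) :
    (∫ t in (0:ℝ)..s', |t| ^ (r-1) * |t + c| ^ α) ≤
      ∫ t in (0:ℝ)..s, |t| ^ (r-1) * |t + c| ^ α :=
  integral_mono_interval le_rfl h0 hss
    (Filter.Eventually.of_forall fun t => by positivity) (pf_int (by linarith) hα c 0 s)

private lemma pf_half {r : ℝ} (hr : 1/2 ≤ r) : (1/2:ℝ) ≤ (1 - 1/(4*r)) ^ r := by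
  have hr0 : (0:ℝ) < r := by linarith
  have h4r : (0:ℝ) < 1/(4*r) := by positivity
  have h4r2 : 1/(4*r) ≤ 1/2 := by
    rw [div_le_div_iff₀ (by positivity) (by norm_num)]; linarith
  rcases le_total 1 r with h1 | h1
  · have hB := one_add_mul_self_le_rpow_one_add
      (s := -(1/(4*r))) (by linarith) h1
    have e1 : (1:ℝ) + -(1/(4*r)) = 1 - 1/(4*r) := by ring
    have e2 : r * (1/(4*r)) = 1/4 := by field_simp
    rw [e1] at hB
    have : (1:ℝ) + r * -(1/(4*r)) = 3/4 := by
      rw [mul_neg, e2]; norm_num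
    rw [this] at hB
    linarith
  · calc (1/2:ℝ) ≤ 1 - 1/(4*r) := by linarith
      _ = (1 - 1/(4*r)) ^ (1:ℝ) := (Real.rpow_one _).symm
      _ ≤ (1 - 1/(4*r)) ^ r := Real.rpow_le_rpow_of_exponent_ge (by linarith) (by linarith) h1

private lemma pf_three {r s : ℝ} (hr : 1/2 ≤ r) (hs0 : 0 ≤ s) (hs : s ≤ 1 + 1/r) :
    s ^ r ≤ 3 := by
  have hr0 : (0:ℝ) < r := by linarith
  calc s ^ r ≤ (1 + 1/r) ^ r := Real.rpow_le_rpow hs0 hs hr0.le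
    _ ≤ (Real.exp (1/r)) ^ r :=
        Real.rpow_le_rpow (by positivity) (by linarith [Real.add_one_le_exp (1/r)]) hr0.le
    _ = Real.exp ((1/r) * r) := (Real.exp_mul (1/r) r).symm
    _ = Real.exp 1 := by rw [one_div, inv_mul_cancel₀ hr0.ne']
    _ ≤ 3 := by linarith [Real.exp_one_lt_d9]

private lemma pf_ratio {r s : ℝ} (hr : 1/2 ≤ r) (hs : 1 + 1/r < s) :
    ((1+s)/2) ^ r ≤ 7/8 * s ^ r := by
  have hr0 : (0:ℝ) < r := by linarith
  have hs1 : 1 < s := by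
    have : (0:ℝ) < 1/r := by positivity
    linarith
  have hs0 : (0:ℝ) < s := by linarith
  have h6 : 1 < r * (s - 1) := by
    have := (div_lt_iff₀ hr0).mp (by linarith : 1/r < s - 1)
    linarith [this]
  set ρ := (1+s)/(2*s) with hρdef
  have hρ0 : (0:ℝ) < ρ := by positivity
  have hρ1 : ρ ≤ 1 := by
    rw [hρdef, div_le_one (by positivity)]; linarith
  have hρle : ρ ≤ 1 - 1/(2*(r+1)) := by
    rw [hρdef, div_le_iff₀ (by positivity)]
    have e1 : (1 - 1/(2*(r+1))) * (2*s) = 2*s - s/(r+1) := by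
      field_simp
    rw [e1]
    have goal' : s/(r+1) ≤ s - 1 := by
      rw [div_le_iff₀ (by positivity : (0:ℝ) < r+1)]
      nlinarith [h6]
    linarith
  have key : ρ ^ r ≤ 7/8 := by
    rcases le_total r 1 with h1 | h1
    · have hw : (1/4:ℝ) ≤ 1/(2*(r+1)) := by
        rw [div_le_div_iff₀ (by norm_num) (by positivity)]; linarith
      have hρ34 : ρ ≤ 3/4 := by linarith
      calc ρ ^ r ≤ ρ ^ (1/2:ℝ) :=
            Real.rpow_le_rpow_of_exponent_ge hρ0 hρ1 hr
        _ ≤ (3/4:ℝ) ^ (1/2:ℝ) := Real.rpow_le_rpow hρ0.le hρ34 (by norm_num)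
        _ ≤ 7/8 := by
            have h2 : ((3/4:ℝ)^(1/2:ℝ))^(2:ℕ) = 3/4 := by
              rw [← Real.rpow_natCast ((3/4:ℝ)^(1/2:ℝ)) 2, ← Real.rpow_mul (by norm_num)]
              norm_num
            nlinarith [Real.rpow_nonneg (by norm_num : (0:ℝ) ≤ 3/4) (1/2:ℝ), h2]
    · set w : ℝ := 1/(2*(r+1)) with hwdef
      have hw0 : (0:ℝ) < w := by positivity
      have hw1 : w ≤ 1/2 := by
        rw [hwdef, div_le_div_iff₀ (by positivity) (by norm_num)]; linarith
      have hinv : ρ ≤ (1+w)⁻¹ := by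
        have h7 : 1 - w ≤ (1+w)⁻¹ := by
          rw [inv_eq_one_div, le_div_iff₀ (by positivity : (0:ℝ) < 1 + w)]
          nlinarith [hw0]
        linarith [hρle]
      have hBern : 1 + r*w ≤ (1+w) ^ r :=
        one_add_mul_self_le_rpow_one_add (by linarith) h1
      have hrw : (1/4:ℝ) ≤ r*w := by
        rw [hwdef]
        rw [show r * (1/(2*(r+1))) = r/(2*(r+1)) by ring]
        rw [div_le_div_iff₀ (by norm_num) (by positivity)]
        linarith
      calc ρ ^ r ≤ ((1+w)⁻¹) ^ r := Real.rpow_le_rpow hρ0.le hinv (by linarith)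
        _ = ((1+w) ^ r)⁻¹ := Real.inv_rpow (by positivity) r
        _ ≤ (1 + r*w)⁻¹ := by
            apply inv_anti₀ (by linarith) hBern
        _ ≤ (5/4:ℝ)⁻¹ := by
            apply inv_anti₀ (by norm_num) (by linarith)
        _ ≤ 7/8 := by norm_num
  have hρs : (1+s)/2 = ρ * s := by
    rw [hρdef]; field_simp
  calc ((1+s)/2) ^ r = (ρ * s) ^ r := by rw [hρs]
    _ = ρ ^ r * s ^ r := Real.mul_rpow hρ0.le hs0.le
    _ ≤ 7/8 * s ^ r := mul_le_mul_of_nonneg_right key (Real.rpow_nonneg hs0.le r)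

private lemma pf_tail {r α s : ℝ} (hr : 1/2 ≤ r) (hα : 0 ≤ α) (hs : 1 + 1/r < s) :
    (1/(2*r))^α * ((s^r - ((1+s)/2)^r)/r) ≤
      ∫ t in (0:ℝ)..s, |t| ^ (r-1) * |t + (-1)| ^ α := by
  have hr0 : (0:ℝ) < r := by linarith
  have hp : (-1:ℝ) < r - 1 := by linarith
  have hs1 : 1 < s := by
    have : (0:ℝ) < 1/r := by positivity
    linarith
  set u : ℝ := (1+s)/2 with hudef
  have h1u : 1 < u := by rw [hudef]; linarith
  have hus : u ≤ s := by rw [hudef]; linarith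
  have h0u : (0:ℝ) ≤ u := by linarith
  have hd : 1/(2*r) ≤ u - 1 := by
    have h6 : 1/r < s - 1 := by linarith
    rw [hudef]
    rw [show (1+s)/2 - 1 = (s-1)/2 by ring]
    rw [div_le_div_iff₀ (by positivity) (by norm_num)]
    nlinarith [(div_lt_iff₀ hr0).mp h6]
  have key : ∀ t ∈ Icc u s, (1/(2*r))^α * t^(r-1) ≤ |t| ^ (r-1) * |t + (-1)| ^ α := by
    intro t ht
    have ht1 : 1 < t := lt_of_lt_of_le h1u ht.1
    have e1 : |t| = t := abs_of_pos (by linarith)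
    have e2 : |t + (-1)| = t - 1 := by
      rw [abs_of_nonneg (by linarith : (0:ℝ) ≤ t + (-1))]; ring
    rw [e1, e2, mul_comm ((1/(2*r))^α)]
    apply mul_le_mul_of_nonneg_left _ (Real.rpow_nonneg (by linarith) _)
    apply Real.rpow_le_rpow (by positivity) _ hα
    have := ht.1
    linarith
  have h2 : (∫ t in u..s, (1/(2*r))^α * t^(r-1)) ≤
      ∫ t in u..s, |t| ^ (r-1) * |t + (-1)| ^ α :=
    integral_mono_on hus ((intervalIntegrable_rpow' hp).const_mul _)
      (pf_int hp hα (-1) u s) key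
  have h3 : (∫ t in u..s, (1/(2*r))^α * t^(r-1)) =
      (1/(2*r))^α * ((s^r - u^r)/r) := by
    rw [intervalIntegral.integral_const_mul, integral_rpow (Or.inl hp)]
    have : r - 1 + 1 = r := by ring
    rw [this]
  have h4 : (∫ t in u..s, |t| ^ (r-1) * |t + (-1)| ^ α) ≤
      ∫ t in (0:ℝ)..s, |t| ^ (r-1) * |t + (-1)| ^ α :=
    integral_mono_interval h0u hus le_rfl
      (Filter.Eventually.of_forall fun t => by positivity) (pf_int hp hα (-1) 0 s)
  linarith [h3 ▸ h2, h4]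

private lemma pf_master {α : ℝ} (hα : 0 < α) {R : ℝ} (hR : 1 < R) {r : ℝ} (hr : 1/2 ≤ r)
    {x : ℝ} (hx : x ∈ Icc (-R) R) :
    (1/(4*r))^α / (8*r) * |x| ^ r ≤ |∫ y in (0:ℝ)..x, |y| ^ (r-1) * |y+1| ^ α| ∧
    |∫ y in (0:ℝ)..x, |y| ^ (r-1) * |y+1| ^ α| ≤ (R+1)^α / r * |x| ^ r := by
  have hr0 : (0:ℝ) < r := by linarith
  obtain ⟨hx1, hx2⟩ := hx
  rcases le_total 0 x with hx0 | hx0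
  · -- x ≥ 0
    have habs : |x| = x := abs_of_nonneg hx0
    have hL : 1 * (x^r/r) ≤ ∫ y in (0:ℝ)..x, |y| ^ (r-1) * |y+1| ^ α := by
      apply pf_lower hr hα.le hx0
      intro t ht
      have h5 : (1:ℝ) ≤ |t+1| := by
        have := ht.1
        calc (1:ℝ) ≤ t + 1 := by linarith
          _ ≤ |t+1| := le_abs_self _
      calc (1:ℝ) = 1 ^ α := (Real.one_rpow α).symm
        _ ≤ |t+1| ^ α := Real.rpow_le_rpow zero_le_one h5 hα.le
    have hU : (∫ y in (0:ℝ)..x, |y| ^ (r-1) * |y+1| ^ α) ≤ (R+1)^α * (x^r/r) := by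
      apply pf_upper hr hα.le hx0
      intro t ht
      apply Real.rpow_le_rpow (abs_nonneg _) _ hα.le
      rw [abs_of_nonneg (by linarith [ht.1] : (0:ℝ) ≤ t + 1)]
      linarith [ht.2]
    have hnn : 0 ≤ ∫ y in (0:ℝ)..x, |y| ^ (r-1) * |y+1| ^ α :=
      le_trans (by positivity) hL
    rw [abs_of_nonneg hnn, habs]
    constructor
    · refine le_trans ?_ hL
      have h9 : (1/(4*r))^α ≤ 1 :=
        Real.rpow_le_one (by positivity)
          (by rw [div_le_one (by positivity)]; linarith) hα.le
      have hxr : (0:ℝ) ≤ x ^ r := Real.rpow_nonneg hx0 r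
      have e1 : (1/(4*r))^α / (8*r) * x^r = ((1/(4*r))^α * x^r) / (8*r) := by ring
      have e2 : 1 * (x^r/r) = x^r / r := by ring
      rw [e1, e2]
      apply div_le_div₀ hxr _ hr0 (by linarith)
      nlinarith [h9, hxr]
    · calc (∫ y in (0:ℝ)..x, |y| ^ (r-1) * |y+1| ^ α) ≤ (R+1)^α * (x^r/r) := hU
        _ = (R+1)^α / r * x^r := by ring
  · -- x ≤ 0
    set s : ℝ := -x with hsdef
    have hs0 : 0 ≤ s := by rw [hsdef]; linarith
    have hsR : s ≤ R := by rw [hsdef]; linarith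
    have habs : |x| = s := by rw [hsdef, abs_of_nonpos hx0]
    have hgnn : 0 ≤ ∫ t in (0:ℝ)..s, |t| ^ (r-1) * |t + (-1)| ^ α :=
      intervalIntegral.integral_nonneg hs0 (fun t _ => by positivity)
    have hflip : |∫ y in (0:ℝ)..x, |y| ^ (r-1) * |y+1| ^ α| =
        ∫ t in (0:ℝ)..s, |t| ^ (r-1) * |t + (-1)| ^ α := by
      have h1 : (∫ t in (0:ℝ)..s, |t| ^ (r-1) * |t + (-1)| ^ α) =
          ∫ t in (0:ℝ)..s, (fun y => |y| ^ (r-1) * |y+1| ^ α) (-t) := by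
        apply integral_congr
        intro t _
        simp only []
        have e1 : |(-t)| = |t| := abs_neg t
        have e2 : |(-t) + 1| = |t + (-1)| := by
          rw [show (-t) + 1 = -(t + (-1)) by ring, abs_neg]
        rw [e1, e2]
      have h2 : (∫ t in (0:ℝ)..s, (fun y => |y| ^ (r-1) * |y+1| ^ α) (-t)) =
          ∫ y in (-s)..(-(0:ℝ)), |y| ^ (r-1) * |y+1| ^ α :=
        integral_comp_neg (fun y => |y| ^ (r-1) * |y+1| ^ α)
      have h3 : (∫ y in (-s)..(-(0:ℝ)), |y| ^ (r-1) * |y+1| ^ α) =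
          - ∫ y in (0:ℝ)..x, |y| ^ (r-1) * |y+1| ^ α := by
        rw [neg_zero, show -s = x by rw [hsdef]; ring]
        exact integral_symm 0 x
      have hGP : (∫ t in (0:ℝ)..s, |t| ^ (r-1) * |t + (-1)| ^ α) =
          - ∫ y in (0:ℝ)..x, |y| ^ (r-1) * |y+1| ^ α := (h1.trans h2).trans h3
      rw [show (∫ y in (0:ℝ)..x, |y| ^ (r-1) * |y+1| ^ α) =
          -(∫ t in (0:ℝ)..s, |t| ^ (r-1) * |t + (-1)| ^ α) by rw [hGP, neg_neg]]
      rw [abs_neg, abs_of_nonneg hgnn]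
    rw [hflip, habs]
    constructor
    · -- lower bound, three cases
      have key : (1/(4*r))^α * (s^r/(8*r)) ≤
          ∫ t in (0:ℝ)..s, |t| ^ (r-1) * |t + (-1)| ^ α := by
        have h4r : (0:ℝ) < 1/(4*r) := by positivity
        rcases le_or_gt s (1 - 1/(4*r)) with hc1 | hc1
        · have h := pf_lower (c := -1) (K := (1/(4*r))^α) hr hα.le hs0 ?_
          · refine le_trans ?_ h
            apply mul_le_mul_of_nonneg_left _ (by positivity)
            apply div_le_div₀ (Real.rpow_nonneg hs0 r) le_rfl hr0 (by linarith)
          · intro t ht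
            apply Real.rpow_le_rpow (by positivity) _ hα.le
            have h2 : t ≤ 1 - 1/(4*r) := le_trans ht.2 hc1
            rw [show t + (-1) = -(1 - t) by ring, abs_neg,
              abs_of_nonneg (by linarith : (0:ℝ) ≤ 1 - t)]
            linarith
        · rcases le_or_gt s (1 + 1/r) with hc2 | hc2
          · set s' : ℝ := 1 - 1/(4*r) with hs'def
            have h4r2 : 1/(4*r) ≤ 1/2 := by
              rw [div_le_div_iff₀ (by positivity) (by norm_num)]; linarith
            have hs'0 : 0 ≤ s' := by rw [hs'def]; linarith
            have h := pf_lower (c := -1) (K := (1/(4*r))^α) hr hα.le hs'0 ?_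
            · have hmono := pf_mono (c := -1) hr hα.le hs'0 hc1.le
              have h12 : (1/2:ℝ) ≤ s'^r := pf_half hr
              have h3s : s^r ≤ 3 := pf_three hr hs0 hc2
              refine le_trans ?_ (le_trans h hmono)
              apply mul_le_mul_of_nonneg_left _ (by positivity)
              rw [div_le_div_iff₀ (by positivity) hr0]
              nlinarith [hr0, h12, h3s]
            · intro t ht
              apply Real.rpow_le_rpow (by positivity) _ hα.le
              have h2 : t ≤ s' := ht.2
              rw [show t + (-1) = -(1 - t) by ring, abs_neg,
                abs_of_nonneg (by rw [hs'def] at h2; linarith : (0:ℝ) ≤ 1 - t)]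
              rw [hs'def] at h2; linarith
          · have htail := pf_tail hr hα.le hc2
            have hratio := pf_ratio hr hc2
            refine le_trans ?_ htail
            have h1 : (1/(4*r))^α ≤ (1/(2*r))^α := by
              apply Real.rpow_le_rpow (by positivity) _ hα.le
              rw [div_le_div_iff₀ (by positivity) (by positivity)]
              linarith
            have h2 : s^r/(8*r) ≤ (s^r - ((1+s)/2)^r)/r := by
              rw [div_le_div_iff₀ (by positivity) hr0]
              nlinarith [hratio, hr0]
            apply mul_le_mul h1 h2 (by positivity) (by positivity)
      refine le_trans (le_of_eq ?_) key
      ring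
    · have hU : (∫ t in (0:ℝ)..s, |t| ^ (r-1) * |t + (-1)| ^ α) ≤ (R+1)^α * (s^r/r) := by
        apply pf_upper hr hα.le hs0
        intro t ht
        apply Real.rpow_le_rpow (abs_nonneg _) _ hα.le
        rw [abs_le]
        constructor <;> [linarith [ht.1, ht.2, hsR]; linarith [ht.1, ht.2, hsR]]
      calc (∫ t in (0:ℝ)..s, |t| ^ (r-1) * |t + (-1)| ^ α) ≤ (R+1)^α * (s^r/r) := hU
        _ = (R+1)^α / r * s^r := by ring

theorem stmt_14 (m : ℝ) (hm : 1 < m) :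
    ∃ C₁ : ℝ, 0 < C₁ ∧ ∀ R : ℝ, 1 < R → ∃ C₂ : ℝ, 0 < C₂ ∧
      ∀ r : ℝ, 1 / 2 ≤ r → ∀ x : ℝ, x ∈ Set.Icc (-R) R →
        (C₁ / r ^ (1 + max 1 ((m - 1) / 2))) * |x| ^ r ≤
            |∫ y in (0 : ℝ)..x, |y| ^ (r - 1) * |y + 1| ^ ((m - 1) / 2)| ∧
        |∫ y in (0 : ℝ)..x, |y| ^ (r - 1) * |y + 1| ^ ((m - 1) / 2)| ≤ (C₂ / r) * |x| ^ r := by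
  set α : ℝ := (m - 1) / 2 with hαdef
  have hα : 0 < α := by rw [hαdef]; linarith
  set M : ℝ := max 1 α with hMdef
  have hM0 : (0:ℝ) ≤ M := le_trans zero_le_one (le_max_left 1 α)
  refine ⟨(1/4:ℝ)^α * (1/2:ℝ)^M / 8, by positivity, ?_⟩
  intro R hR
  refine ⟨(R+1)^α, by positivity, ?_⟩
  intro r hr x hx
  have hr0 : (0:ℝ) < r := by linarith
  obtain ⟨h1, h2⟩ := pf_master hα hR hr hx
  refine ⟨le_trans ?_ h1, le_trans h2 (le_of_eq (by ring))⟩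
  apply mul_le_mul_of_nonneg_right _ (Real.rpow_nonneg (abs_nonneg x) r)
  have hXc : r ^ ((1:ℝ) + M) = r * r^M := by rw [Real.rpow_add hr0, Real.rpow_one]
  have hd : (0:ℝ) < r^α := Real.rpow_pos_of_pos hr0 α
  have hc : (0:ℝ) < r^M := Real.rpow_pos_of_pos hr0 M
  have hkey : (1/2:ℝ)^M * r^α ≤ r^M := by
    rcases le_total 1 r with h | h
    · calc (1/2:ℝ)^M * r^α ≤ 1 * r^M :=
          mul_le_mul (Real.rpow_le_one (by norm_num) (by norm_num) hM0)
            (Real.rpow_le_rpow_of_exponent_le h (le_max_right 1 α)) hd.le zero_le_one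
        _ = r^M := one_mul _
    · calc (1/2:ℝ)^M * r^α ≤ r^M * 1 :=
          mul_le_mul (Real.rpow_le_rpow (by norm_num) (by linarith) hM0)
            (Real.rpow_le_one hr0.le h hα.le) hd.le hc.le
        _ = r^M := mul_one _
  have hsplit : (1/(4*r):ℝ)^α = (1/4:ℝ)^α * (r^α)⁻¹ := by
    rw [show (1/(4*r):ℝ) = (1/4) * r⁻¹ by rw [one_div, one_div, mul_inv]]
    rw [Real.mul_rpow (by norm_num) (by positivity), Real.inv_rpow hr0.le]
  have ha : (0:ℝ) < (1/4:ℝ)^α := Real.rpow_pos_of_pos (by norm_num) α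
  have hb : (0:ℝ) < (1/2:ℝ)^M := Real.rpow_pos_of_pos (by norm_num) M
  rw [hXc, hsplit, div_le_div_iff₀ (by positivity) (by positivity)]
  -- goal: (1/4)^α * (1/2)^M / 8 * (8*r) ≤ (1/4)^α * (r^α)⁻¹ * (r * r^M)
  have h5 : (1/2:ℝ)^M ≤ (r^α)⁻¹ * r^M := by
    rw [show (r^α)⁻¹ * r^M = r^M / r^α by ring, le_div_iff₀ hd]
    exact hkey
  nlinarith [mul_le_mul_of_nonneg_left h5 (by positivity : (0:ℝ) ≤ (1/4:ℝ)^α * r)]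
end
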